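/- Let λ, μ₁, μ₂ ∈ (0,1) with λ < μ₁ + μ₂. With p₊ = λ(1 − μ₁)(1 − μ₂), p₋₁ = (1 − λ)((1 − μ₁)μ₂ + (1 − μ₂)μ₁) + λμ₁μ₂, p₋₂ = (1 − λ)μ₁μ₂, and α = (−(p₋₁ + p₋₂) + sqrt((p₋₁ + p₋₂)² + 4·p₊·p₋₂)) / (2·p₋₂) ∈ (0,1), define the sequence (π_q)_{q ≥ 0} by: π₀ = (1 + (λ / D)·(1 + α / ((1 − α)(1 − μ₂))))^{−1} where D = (1 − λ)μ₁ + α·p₋₂/(1 − μ₂); π₁ = λ·π₀ / D; π₂ = α·π₁ / (1 − μ₂); and π_{q+1} = α·π_q for q ≥ 2. Then π is a probability distribution on ℤ₊ (π_q ≥ 0 and Σ_q π_q = 1) and is a stationary distribution of the chain: Σ_q π_q · P(q, q') = π_{q'} for every q' ∈ ℤ₊. -/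

import Mathlib

/-- Probability weight of a Bernoulli(p) outcome. -/
noncomputable def bern (p : ℝ) (x : Bool) : ℝ := if x then p else 1 - p

/-- Numerical value of a Bernoulli indicator. -/
def b2n (x : Bool) : ℕ := if x then 1 else 0

/-- One-step transition of the single-queue two-server chain. -/
def nextQ (q : ℕ) (x1 x2 a : Bool) : ℕ :=
  if 2 ≤ q then q - b2n x1 - b2n x2 + b2n a
  else if q = 1 then 1 - b2n x1 + b2n a
  else b2n a

/-- Transition kernel of the single-queue two-server chain: Bernoulli(λ) arrivals,
a priority server of rate μ₁ serving whenever the queue is nonempty, and a second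
server of rate μ₂ serving whenever at least two jobs are present. -/
noncomputable def P1 (lam mu1 mu2 : ℝ) (q q' : ℕ) : ℝ :=
  ∑ x1 : Bool, ∑ x2 : Bool, ∑ a : Bool,
    bern mu1 x1 * bern mu2 x2 * bern lam a * (if q' = nextQ q x1 x2 a then 1 else 0)

lemma sq18_P1_zero (lam mu1 mu2 : ℝ) (q' : ℕ) :
    P1 lam mu1 mu2 0 q' = if q' = 0 then 1 - lam else if q' = 1 then lam else 0 := by
  rcases q' with _|_|q' <;> simp [P1, Fintype.sum_bool, bern, nextQ, b2n] <;> ring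

lemma sq18_P1_one (lam mu1 mu2 : ℝ) (q' : ℕ) :
    P1 lam mu1 mu2 1 q' = if q' = 0 then (1-lam)*mu1
      else if q' = 1 then lam*mu1 + (1-lam)*(1-mu1)
      else if q' = 2 then lam*(1-mu1) else 0 := by
  rcases q' with _|_|_|q' <;> simp [P1, Fintype.sum_bool, bern, nextQ, b2n] <;> ring

lemma sq18_P1_add2 (lam mu1 mu2 : ℝ) (m q' : ℕ) :
    P1 lam mu1 mu2 (m+2) q' =
      if q' = m then (1-lam)*mu1*mu2
      else if q' = m+1 then (1-lam)*((1-mu1)*mu2+(1-mu2)*mu1)+lam*mu1*mu2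
      else if q' = m+2 then lam*(mu1*(1-mu2)+(1-mu1)*mu2) + (1-lam)*(1-mu1)*(1-mu2)
      else if q' = m+3 then lam*(1-mu1)*(1-mu2)
      else 0 := by
  simp only [P1, Fintype.sum_bool, bern, nextQ, b2n]
  norm_num
  split_ifs <;> first | omega | ring

lemma sq18_P1_ge2 (lam mu1 mu2 : ℝ) (q q' : ℕ) (h : 2 ≤ q) :
    P1 lam mu1 mu2 q q' =
      if q' + 2 = q then (1-lam)*mu1*mu2
      else if q' + 1 = q then (1-lam)*((1-mu1)*mu2+(1-mu2)*mu1)+lam*mu1*mu2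
      else if q' = q then lam*(mu1*(1-mu2)+(1-mu1)*mu2) + (1-lam)*(1-mu1)*(1-mu2)
      else if q' = q + 1 then lam*(1-mu1)*(1-mu2)
      else 0 := by
  obtain ⟨m, rfl⟩ : ∃ m, q = m + 2 := ⟨q - 2, by omega⟩
  rw [sq18_P1_add2]
  exact if_congr (by omega) rfl (if_congr (by omega) rfl
    (if_congr (by omega) rfl (if_congr (by omega) rfl rfl)))

set_option maxHeartbeats 1000000 in
/-- For `λ, μ₁, μ₂ ∈ (0,1)` with `λ < μ₁ + μ₂`, the explicitly
defined sequence `π` (with `π₀ = (1 + (λ/D)(1 + α/((1−α)(1−μ₂))))⁻¹`,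
`D = (1−λ)μ₁ + α p₋₂/(1−μ₂)`, `π₁ = λπ₀/D`, `π₂ = απ₁/(1−μ₂)` and
`π_{q+1} = α π_q` for `q ≥ 2`) is a probability distribution on `ℤ₊` and is
stationary for the chain: `Σ_q π_q P(q,q') = π_{q'}` for every `q'`. -/
theorem stationary_distribution_single_queue_two_servers
    (lam mu1 mu2 : ℝ)
    (hlam : lam ∈ Set.Ioo (0:ℝ) 1) (hmu1 : mu1 ∈ Set.Ioo (0:ℝ) 1)
    (hmu2 : mu2 ∈ Set.Ioo (0:ℝ) 1) (hstab : lam < mu1 + mu2) :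
    let pp : ℝ := lam * (1 - mu1) * (1 - mu2)
    let pm1 : ℝ := (1 - lam) * ((1 - mu1) * mu2 + (1 - mu2) * mu1) + lam * mu1 * mu2
    let pm2 : ℝ := (1 - lam) * mu1 * mu2
    let a : ℝ := (-(pm1 + pm2) + Real.sqrt ((pm1 + pm2) ^ 2 + 4 * pp * pm2)) / (2 * pm2)
    let D : ℝ := (1 - lam) * mu1 + a * pm2 / (1 - mu2)
    let pi0 : ℝ := (1 + (lam / D) * (1 + a / ((1 - a) * (1 - mu2))))⁻¹
    let piDist : ℕ → ℝ := fun q =>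
      if q = 0 then pi0
      else if q = 1 then lam * pi0 / D
      else (a / (1 - mu2)) * (lam * pi0 / D) * a ^ (q - 2)
    (0 < a ∧ a < 1) ∧
    (∀ q, 0 ≤ piDist q) ∧
    HasSum piDist 1 ∧
    ∀ q' : ℕ, HasSum (fun q => piDist q * P1 lam mu1 mu2 q q') (piDist q') := by
  obtain ⟨hl0, hl1⟩ := hlam
  obtain ⟨hm10, hm11⟩ := hmu1
  obtain ⟨hm20, hm21⟩ := hmu2
  intro pp pm1 pm2 a D pi0 piDist
  have hpp : pp = lam * (1 - mu1) * (1 - mu2) := rfl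
  have hpm1 : pm1 = (1 - lam) * ((1 - mu1) * mu2 + (1 - mu2) * mu1) + lam * mu1 * mu2 := rfl
  have hpm2 : pm2 = (1 - lam) * mu1 * mu2 := rfl
  have hadf : a = (-(pm1 + pm2) + Real.sqrt ((pm1 + pm2) ^ 2 + 4 * pp * pm2)) / (2 * pm2) := rfl
  have hDdef : D = (1 - lam) * mu1 + a * pm2 / (1 - mu2) := rfl
  have hpi0def : pi0 = (1 + (lam / D) * (1 + a / ((1 - a) * (1 - mu2))))⁻¹ := rfl
  have hpiDef : piDist = fun q =>
      if q = 0 then pi0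
      else if q = 1 then lam * pi0 / D
      else (a / (1 - mu2)) * (lam * pi0 / D) * a ^ (q - 2) := rfl
  clear_value pp pm1 pm2 a D pi0 piDist
  have h1l : (0:ℝ) < 1 - lam := by linarith
  have h1m1 : (0:ℝ) < 1 - mu1 := by linarith
  have h1m2 : (0:ℝ) < 1 - mu2 := by linarith
  have h1m2ne : (1:ℝ) - mu2 ≠ 0 := ne_of_gt h1m2
  have hppPos : 0 < pp := by rw [hpp]; exact mul_pos (mul_pos hl0 h1m1) h1m2
  have hpm2Pos : 0 < pm2 := by rw [hpm2]; exact mul_pos (mul_pos h1l hm10) hm20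
  have hpm1Pos : 0 < pm1 := by
    rw [hpm1]
    exact add_pos (mul_pos h1l (by nlinarith [mul_pos h1m1 hm20, mul_pos h1m2 hm10]))
      (mul_pos (mul_pos hl0 hm10) hm20)
  have hbnn : (0:ℝ) ≤ pm1 + pm2 := by linarith
  have hsq : Real.sqrt ((pm1+pm2)^2 + 4*pp*pm2) ^ 2 = (pm1+pm2)^2 + 4*pp*pm2 :=
    Real.sq_sqrt (by nlinarith)
  have hsnn : 0 ≤ Real.sqrt ((pm1+pm2)^2 + 4*pp*pm2) := Real.sqrt_nonneg _
  have hsgt : pm1 + pm2 < Real.sqrt ((pm1+pm2)^2 + 4*pp*pm2) := by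
    nlinarith [hsq, hsnn, hppPos, hpm2Pos]
  have ha0 : 0 < a := by
    rw [hadf]; exact div_pos (by linarith) (by linarith)
  have hadef : a * (2*pm2) = -(pm1+pm2) + Real.sqrt ((pm1+pm2)^2 + 4*pp*pm2) := by
    rw [hadf, div_mul_cancel₀]
    exact ne_of_gt (by linarith)
  have hsq2 : (a*(2*pm2) + (pm1+pm2))^2 = (pm1+pm2)^2 + 4*pp*pm2 :=
    calc (a*(2*pm2) + (pm1+pm2))^2
        = Real.sqrt ((pm1+pm2)^2 + 4*pp*pm2) ^ 2 := by rw [hadef]; ring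
      _ = (pm1+pm2)^2 + 4*pp*pm2 := hsq
  have hquad : pm2 * a^2 + (pm1+pm2)*a = pp := by
    have h2 : (4*pm2) * (pm2*a^2 + (pm1+pm2)*a - pp) = 0 := by linear_combination hsq2
    rcases mul_eq_zero.mp h2 with h|h
    · linarith
    · linarith
  clear hsq hsnn hsgt hadef hsq2 hadf
  have ha1 : a < 1 := by
    have hlt : pp < pm1 + 2*pm2 := by
      have : pm1 + 2*pm2 - pp = mu1 + mu2 - lam := by rw [hpp, hpm1, hpm2]; ring
      linarith
    by_contra h
    push_neg at h
    have hkey : 0 ≤ (a-1) * (pm2*(a+1) + (pm1+pm2)) :=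
      mul_nonneg (by linarith) (by nlinarith)
    nlinarith [hkey, hquad, hlt]
  have h1a : (0:ℝ) < 1 - a := by linarith
  have h1ane : (1:ℝ) - a ≠ 0 := ne_of_gt h1a
  have hDpos : 0 < D := by
    rw [hDdef]
    have h1 : 0 < a * pm2 / (1-mu2) := div_pos (mul_pos ha0 hpm2Pos) h1m2
    have h2 : 0 < (1-lam)*mu1 := mul_pos h1l hm10
    linarith
  have hDne : D ≠ 0 := ne_of_gt hDpos
  have hDrel : D * (1-mu2) = (1-lam)*mu1*(1-mu2) + a*((1-lam)*mu1*mu2) := by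
    rw [hDdef, hpm2]; field_simp
  have hbrPos : 0 < 1 + (lam / D) * (1 + a / ((1 - a) * (1 - mu2))) := by
    have h1 : 0 < a / ((1-a)*(1-mu2)) := div_pos ha0 (mul_pos h1a h1m2)
    have h2 : 0 < lam / D := div_pos hl0 hDpos
    nlinarith
  have hpi0Pos : 0 < pi0 := by rw [hpi0def]; exact inv_pos.mpr hbrPos
  have hpi0mul : pi0 * (1 + (lam / D) * (1 + a / ((1 - a) * (1 - mu2)))) = 1 := by
    rw [hpi0def]; exact inv_mul_cancel₀ (ne_of_gt hbrPos)
  have hquadE : ((1-lam)*mu1*mu2) * a^2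
      + (((1-lam)*((1-mu1)*mu2+(1-mu2)*mu1) + lam*mu1*mu2) + (1-lam)*mu1*mu2) * a
      = lam*(1-mu1)*(1-mu2) := by
    have h := hquad; rw [hpp, hpm1, hpm2] at h; linarith
  have hpiAt : ∀ k : ℕ, 2 ≤ k → piDist k = (a / (1-mu2)) * (lam * pi0 / D) * a ^ (k-2) := by
    intro k hk
    rw [hpiDef]
    simp only
    rw [if_neg (by omega), if_neg (by omega)]
  have hpi0at : piDist 0 = pi0 := by simp [hpiDef]
  have hpi1at : piDist 1 = lam * pi0 / D := by simp [hpiDef]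
  set z : ℝ := lam * pi0 / D with hzdef
  have hzD : z * D = lam * pi0 := by rw [hzdef]; field_simp
  clear_value z
  have hzPos : 0 < z := by rw [hzdef]; exact div_pos (mul_pos hl0 hpi0Pos) hDpos
  refine ⟨⟨ha0, ha1⟩, ?_, ?_, ?_⟩
  · intro q
    rw [hpiDef]
    simp only
    split_ifs
    · exact hpi0Pos.le
    · exact hzPos.le
    · exact mul_nonneg (mul_nonneg (div_pos ha0 h1m2).le hzPos.le) (pow_nonneg ha0.le _)
  · -- HasSum piDist 1
    have hgeo : HasSum (fun n : ℕ => ((a/(1-mu2)) * z) * a^n)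
        (((a/(1-mu2)) * z) * (1-a)⁻¹) :=
      (hasSum_geometric_of_lt_one ha0.le ha1).mul_left _
    have hshift : (fun n : ℕ => piDist (n+2)) = fun n => ((a/(1-mu2)) * z) * a^n := by
      funext n
      rw [hpiAt (n+2) (by omega), show n+2-2 = n from by omega]
    rw [← hshift] at hgeo
    have h2 := (hasSum_nat_add_iff (f := piDist) 2).mp hgeo
    have hval : ((a/(1-mu2)) * z) * (1-a)⁻¹ + ∑ i ∈ Finset.range 2, piDist i = 1 := by
      rw [Finset.sum_range_succ, Finset.sum_range_one, hpi0at, hpi1at]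
      conv_rhs => rw [← hpi0mul]
      field_simp
      linear_combination ((1-a)*(1-mu2)+a) * hzD
    rwa [hval] at h2
  · intro q'
    have hsupp : ∀ q ∉ Finset.range (q'+3), piDist q * P1 lam mu1 mu2 q q' = 0 := by
      intro q hq
      simp only [Finset.mem_range, not_lt] at hq
      rw [sq18_P1_ge2 lam mu1 mu2 q q' (by omega), if_neg (by omega), if_neg (by omega),
        if_neg (by omega), if_neg (by omega), mul_zero]
    have hfin : HasSum (fun q => piDist q * P1 lam mu1 mu2 q q')
        (∑ q ∈ Finset.range (q'+3), piDist q * P1 lam mu1 mu2 q q') :=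
      hasSum_sum_of_ne_finset_zero hsupp
    suffices hval : ∑ q ∈ Finset.range (q'+3), piDist q * P1 lam mu1 mu2 q q' = piDist q' by
      rwa [hval] at hfin
    rcases q' with _|_|_|n
    · -- q' = 0
      rw [show (0:ℕ)+3 = 3 from rfl, Finset.sum_range_succ, Finset.sum_range_succ,
        Finset.sum_range_one]
      rw [sq18_P1_zero, sq18_P1_one, sq18_P1_ge2 lam mu1 mu2 2 0 (by omega)]
      rw [hpi0at, hpi1at, hpiAt 2 (by omega)]
      norm_num
      field_simp
      linear_combination (1-mu2) * hzD - z * hDrel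
    · -- q' = 1
      rw [show (1:ℕ)+3 = 4 from rfl, Finset.sum_range_succ, Finset.sum_range_succ,
        Finset.sum_range_succ, Finset.sum_range_one]
      rw [sq18_P1_zero, sq18_P1_one, sq18_P1_ge2 lam mu1 mu2 2 1 (by omega),
        sq18_P1_ge2 lam mu1 mu2 3 1 (by omega)]
      rw [hpi0at, hpi1at, hpiAt 2 (by omega), hpiAt 3 (by omega)]
      norm_num
      field_simp
      linear_combination -((1-mu2) * hzD) + z * hDrel + z * hquadE
    · -- q' = 2
      rw [show (2:ℕ)+3 = 5 from rfl, Finset.sum_range_succ, Finset.sum_range_succ,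
        Finset.sum_range_succ, Finset.sum_range_succ, Finset.sum_range_one]
      rw [sq18_P1_zero, sq18_P1_one, sq18_P1_ge2 lam mu1 mu2 2 2 (by omega),
        sq18_P1_ge2 lam mu1 mu2 3 2 (by omega), sq18_P1_ge2 lam mu1 mu2 4 2 (by omega)]
      rw [hpi0at, hpi1at, hpiAt 2 (by omega), hpiAt 3 (by omega), hpiAt 4 (by omega)]
      norm_num
      field_simp
      linear_combination (a-1) * hquadE
    · -- q' = n+3
      have hss : Finset.range (n+3+3) = Finset.range (n+2) ∪ {n+2, n+3, n+4, n+5} := by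
        ext x
        simp [Finset.mem_range, Finset.mem_union, Finset.mem_insert]
        omega
      rw [hss, Finset.sum_union (by
        simp only [Finset.disjoint_left, Finset.mem_range, Finset.mem_insert,
          Finset.mem_singleton]
        omega)]
      have hz : ∑ q ∈ Finset.range (n+2), piDist q * P1 lam mu1 mu2 q (n+3) = 0 := by
        apply Finset.sum_eq_zero
        intro q hq
        simp only [Finset.mem_range] at hq
        match q, hq with
        | 0, _ => rw [sq18_P1_zero, if_neg (by omega), if_neg (by omega), mul_zero]
        | 1, _ => rw [sq18_P1_one, if_neg (by omega), if_neg (by omega),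
            if_neg (by omega), mul_zero]
        | (m+2), hq => rw [sq18_P1_ge2 lam mu1 mu2 (m+2) (n+3) (by omega),
            if_neg (by omega), if_neg (by omega), if_neg (by omega), if_neg (by omega),
            mul_zero]
      rw [hz, zero_add]
      rw [show ({n+2, n+3, n+4, n+5} : Finset ℕ)
          = insert (n+2) (insert (n+3) (insert (n+4) {n+5})) from rfl,
        Finset.sum_insert (by simp only [Finset.mem_insert, Finset.mem_singleton]; omega),
        Finset.sum_insert (by simp only [Finset.mem_insert, Finset.mem_singleton]; omega),
        Finset.sum_insert (by simp only [Finset.mem_singleton]; omega),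
        Finset.sum_singleton]
      rw [sq18_P1_ge2 lam mu1 mu2 (n+2) (n+3) (by omega),
        sq18_P1_ge2 lam mu1 mu2 (n+3) (n+3) (by omega),
        sq18_P1_ge2 lam mu1 mu2 (n+4) (n+3) (by omega),
        sq18_P1_ge2 lam mu1 mu2 (n+5) (n+3) (by omega)]
      rw [if_neg (by omega), if_neg (by omega), if_neg (by omega), if_pos (by omega)]
      rw [if_neg (by omega), if_neg (by omega), if_pos (by omega)]
      rw [if_neg (by omega), if_pos (by omega)]
      rw [if_pos (by omega)]
      rw [hpiAt (n+2) (by omega), hpiAt (n+3) (by omega), hpiAt (n+4) (by omega),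
        hpiAt (n+5) (by omega)]
      rw [show n+2-2 = n from by omega, show n+3-2 = n+1 from by omega,
        show n+4-2 = n+2 from by omega, show n+5-2 = n+3 from by omega]
      field_simp
      linear_combination (a^n * (a-1)) * hquadE
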